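/- Let K be an algebraic number field, α ∈ O_K an admissible Wieferich base, and p an odd rational prime that is unramified in K. Let 𝔭 be a prime ideal of O_K above p with α ∉ 𝔭, let f = f_α(𝔭) be the multiplicative order of α modulo 𝔭, and let δ = ord_𝔭((α^f − 1)O_K). Then for every positive integer n: ord_𝔭((Φ_n(α))O_K) = δ if n = f; ord_𝔭((Φ_n(α))O_K) = 1 if n = p^i·f for some i ≥ 1; and ord_𝔭((Φ_n(α))O_K) = 0 otherwise. -/

import Mathlib

open NumberField UniqueFactorizationMonoid

set_option linter.unusedSectionVars false
set_option synthInstance.maxHeartbeats 1000000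
set_option maxHeartbeats 1000000

/-- `ordIdeal P I` is the exponent of the prime ideal `P` in the prime ideal
factorization of the ideal `I` of `𝓞 K`. -/
noncomputable def ordIdeal {K : Type*} [Field K] [NumberField K] (P I : Ideal (𝓞 K)) : ℕ :=
  @Multiset.count _ (Classical.decEq _) P (UniqueFactorizationMonoid.normalizedFactors I)

section Aux

variable {K : Type*} [Field K] [NumberField K]

lemma ordIdeal_eq_count [DecidableEq (Ideal (𝓞 K))] (P I : Ideal (𝓞 K)) :
    ordIdeal P I = Multiset.count P (normalizedFactors I) := by
  unfold ordIdeal; congr!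

lemma ord_eq (P : Ideal (𝓞 K)) [hP : P.IsPrime] {a : 𝓞 K} {k : ℕ}
    (h1 : a ∈ P ^ k) (h2 : a ∉ P ^ (k + 1)) :
    ordIdeal P (Ideal.span {a}) = k := by
  classical
  rw [ordIdeal_eq_count]
  exact Ideal.count_normalizedFactors_eq
    ((Ideal.span_singleton_le_iff_mem _).mpr h1)
    (fun h => h2 ((Ideal.span_singleton_le_iff_mem _).mp h))

lemma ord_eq_zero (P : Ideal (𝓞 K)) [P.IsPrime] {a : 𝓞 K} (h : a ∉ P) :
    ordIdeal P (Ideal.span {a}) = 0 :=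
  ord_eq P (by simp) (by simpa using h)

lemma ord_mul (P : Ideal (𝓞 K)) {a b : 𝓞 K} (ha : a ≠ 0) (hb : b ≠ 0) :
    ordIdeal P (Ideal.span {a * b})
      = ordIdeal P (Ideal.span {a}) + ordIdeal P (Ideal.span {b}) := by
  classical
  rw [ordIdeal_eq_count, ordIdeal_eq_count, ordIdeal_eq_count,
    ← Ideal.span_singleton_mul_span_singleton,
    normalizedFactors_mul (by simpa [Ne, Ideal.span_singleton_eq_bot] using ha)
      (by simpa [Ne, Ideal.span_singleton_eq_bot] using hb),
    Multiset.count_add]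

lemma ord_prod (P : Ideal (𝓞 K)) (s : Finset ℕ) (g : ℕ → 𝓞 K) (hg : ∀ d ∈ s, g d ≠ 0) :
    ordIdeal P (Ideal.span {∏ d ∈ s, g d}) = ∑ d ∈ s, ordIdeal P (Ideal.span {g d}) := by
  classical
  induction s using Finset.cons_induction with
  | empty =>
      simp only [Finset.prod_empty, Finset.sum_empty, ordIdeal_eq_count]
      rw [Ideal.span_singleton_one, ← Ideal.one_eq_top, normalizedFactors_one]
      simp
  | cons a s ha ih =>
      rw [Finset.prod_cons, Finset.sum_cons,
        ord_mul P (hg a (Finset.mem_cons_self a s))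
          (Finset.prod_ne_zero_iff.mpr fun d hd => hg d (Finset.mem_cons_of_mem hd)),
        ih (fun d hd => hg d (Finset.mem_cons_of_mem hd))]

lemma order_iff (α : 𝓞 K) (P : Ideal (𝓞 K))
    (f : ℕ) (hf : 0 < f) (hf1 : α ^ f - 1 ∈ P)
    (hfmin : ∀ m : ℕ, 0 < m → α ^ m - 1 ∈ P → f ≤ m) :
    ∀ m : ℕ, (α ^ m - 1 ∈ P ↔ f ∣ m) := by
  have hdvd : ∀ c : ℕ, α ^ (f * c) - 1 ∈ P := by
    intro c
    have h : α ^ f - 1 ∣ α ^ (f * c) - 1 := by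
      simpa [pow_mul] using sub_dvd_pow_sub_pow (α ^ f) 1 c
    obtain ⟨w, hw⟩ := h
    rw [hw]; exact Ideal.mul_mem_right _ _ hf1
  intro m
  constructor
  · intro hm
    have hr : α ^ (m % f) - 1 ∈ P := by
      have h1 : α ^ (f * (m / f)) - 1 ∈ P := hdvd _
      have hme : α ^ m = α ^ (f * (m / f)) * α ^ (m % f) := by
        rw [← pow_add, Nat.div_add_mod]
      have key : α ^ (m % f) - 1 =
          α ^ (m % f) * (1 - α ^ (f * (m / f))) + (α ^ m - 1) := by
        rw [hme]; ring
      rw [key]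
      exact Ideal.add_mem _ (Ideal.mul_mem_left _ _ (by
        have h3 : (1 : 𝓞 K) - α ^ (f * (m / f)) = -(α ^ (f * (m / f)) - 1) := by ring
        rw [h3]; exact neg_mem h1)) hm
    by_cases hr0 : m % f = 0
    · exact Nat.dvd_of_mod_eq_zero hr0
    · exact absurd (hfmin _ (Nat.pos_of_ne_zero hr0) hr) (not_le.mpr (Nat.mod_lt m hf))
  · rintro ⟨c, rfl⟩; exact hdvd c

lemma notmemP (P : Ideal (𝓞 K)) (hP : P.IsPrime) (p : ℕ) (hp : p.Prime)
    (hPp : (p : 𝓞 K) ∈ P) :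
    ∀ t : ℕ, ¬ p ∣ t → (t : 𝓞 K) ∉ P := by
  intro t hpt ht
  have h1 : IsCoprime (p : ℤ) (t : ℤ) := by
    rw [Int.isCoprime_iff_gcd_eq_one, Int.gcd_natCast_natCast]
    exact (Nat.Prime.coprime_iff_not_dvd hp).mpr hpt
  obtain ⟨u, w, huw⟩ := h1
  have h2 := congrArg (algebraMap ℤ (𝓞 K)) huw
  push_cast at h2
  apply hP.ne_top
  rw [Ideal.eq_top_iff_one, ← h2]
  exact Ideal.add_mem _ (Ideal.mul_mem_left _ _ hPp) (Ideal.mul_mem_left _ _ ht)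

lemma p_not_dvd_f (α : 𝓞 K) (p : ℕ) (hp : p.Prime)
    (P : Ideal (𝓞 K)) (hP : P.IsPrime) (hPp : (p : 𝓞 K) ∈ P)
    (f : ℕ) (hf : 0 < f) (hf1 : α ^ f - 1 ∈ P)
    (hfmin : ∀ m : ℕ, 0 < m → α ^ m - 1 ∈ P → f ≤ m) :
    ¬ p ∣ f := by
  rintro ⟨m, hm⟩
  have hm0 : 0 < m := by
    rcases Nat.eq_zero_or_pos m with h | h
    · subst h; omega
    · exact h
  haveI : Fact p.Prime := ⟨hp⟩
  haveI := Ideal.Quotient.isDomain P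
  haveI : Nontrivial (𝓞 K ⧸ P) := Ideal.Quotient.nontrivial_iff.mpr hP.ne_top
  have h0 : (p : 𝓞 K ⧸ P) = 0 := by
    rw [← map_natCast (Ideal.Quotient.mk P)]
    exact Ideal.Quotient.eq_zero_iff_mem.2 hPp
  haveI hchar : CharP (𝓞 K ⧸ P) p := (CharP.charP_iff_prime_eq_zero hp).mpr h0
  set π := Ideal.Quotient.mk P with hπ
  have hzero : (π α ^ m - 1) ^ p = 0 := by
    rw [sub_pow_char, one_pow, ← pow_mul, ← map_pow, mul_comm m p, ← hm]
    have h1 : π (α ^ f - 1) = 0 := Ideal.Quotient.eq_zero_iff_mem.2 hf1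
    rw [map_sub, map_one] at h1
    simpa using h1
  have hz2 : π α ^ m - 1 = 0 := pow_eq_zero_iff hp.ne_zero |>.mp hzero
  have hmem : α ^ m - 1 ∈ P := by
    rw [← Ideal.Quotient.eq_zero_iff_mem, map_sub, map_one, map_pow]
    exact hz2
  have hge := hfmin m hm0 hmem
  have h2 := hp.two_le
  nlinarith

lemma p_not_in_P2 (p : ℕ) (hp : p.Prime)
    (hunram : ∀ Q : Ideal (𝓞 K), Q.IsPrime → (p : 𝓞 K) ∈ Q →
      Ideal.ramificationIdx' (Ideal.span {(p : ℤ)}) Q = 1)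
    (P : Ideal (𝓞 K)) (hP : P.IsPrime) (hPbot : P ≠ ⊥) (hPp : (p : 𝓞 K) ∈ P) :
    (p : 𝓞 K) ∉ P ^ 2 := by
  classical
  intro h2
  have hmap : Ideal.map (algebraMap ℤ (𝓞 K)) (Ideal.span {(p : ℤ)})
      = Ideal.span {(p : 𝓞 K)} := by
    rw [Ideal.map_span, Set.image_singleton]
    norm_cast
  have hp0 : (p : 𝓞 K) ≠ 0 := Nat.cast_ne_zero.mpr hp.ne_zero
  have hspan_ne : Ideal.span {(p : 𝓞 K)} ≠ 0 := by
    simpa [Ne, Ideal.span_singleton_eq_bot] using hp0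
  have hcount := Ideal.IsDedekindDomain.ramificationIdx'_eq_normalizedFactors_count
    (p := Ideal.span {(p : ℤ)}) (P := P)
    (by rw [hmap]; exact hspan_ne) hP hPbot
  rw [hunram P hP hPp, hmap] at hcount
  have hPprime := Ideal.prime_of_isPrime hPbot hP
  have hdvd : P ^ 2 ∣ Ideal.span {(p : 𝓞 K)} :=
    Ideal.dvd_iff_le.mpr ((Ideal.span_singleton_le_iff_mem _).mpr h2)
  have hle := (dvd_iff_normalizedFactors_le_normalizedFactors
    (pow_ne_zero 2 hPbot) hspan_ne).mp hdvd
  rw [normalizedFactors_pow, normalizedFactors_irreducible hPprime.irreducible,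
    normalize_eq, Multiset.nsmul_singleton, ← Multiset.le_count_iff_replicate_le] at hle
  omega

lemma geom_sub_mem (P : Ideal (𝓞 K)) {x : 𝓞 K} (hx : x - 1 ∈ P) (t : ℕ) :
    (∑ j ∈ Finset.range t, x ^ j) - (t : 𝓞 K) ∈ P := by
  have h : (∑ j ∈ Finset.range t, x ^ j) - (t : 𝓞 K)
      = ∑ j ∈ Finset.range t, (x ^ j - 1) := by
    rw [Finset.sum_sub_distrib]
    simp
  rw [h]
  refine Ideal.sum_mem _ fun j _ => ?_
  have hd : x - 1 ∣ x ^ j - 1 := by simpa using sub_dvd_pow_sub_pow x 1 j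
  obtain ⟨c, hc⟩ := hd
  rw [hc]; exact Ideal.mul_mem_right _ _ hx

lemma lte_L1 (P : Ideal (𝓞 K)) [P.IsPrime] (p : ℕ)
    (hnot : ∀ t : ℕ, ¬ p ∣ t → (t : 𝓞 K) ∉ P)
    {x : 𝓞 K} (hx : x - 1 ∈ P) (hx0 : x - 1 ≠ 0) {t : ℕ} (hpt : ¬ p ∣ t) :
    ordIdeal P (Ideal.span {x ^ t - 1}) = ordIdeal P (Ideal.span {x - 1}) := by
  set S := ∑ j ∈ Finset.range t, x ^ j with hS
  have hSP : S ∉ P := by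
    intro hmem
    have h1 := geom_sub_mem P hx t
    have h2 : (t : 𝓞 K) ∈ P := by
      have := Ideal.sub_mem P hmem h1
      simpa [hS] using this
    exact hnot t hpt h2
  have hmul : x ^ t - 1 = (x - 1) * S := (mul_geom_sum x t).symm
  have hS0 : S ≠ 0 := fun h => hSP (h ▸ P.zero_mem)
  rw [hmul, ord_mul P hx0 hS0, ord_eq_zero P hSP, add_zero]

lemma lte_L2 (P : Ideal (𝓞 K)) [P.IsPrime] (p : ℕ) (hpodd : Odd p)
    (hPp : (p : 𝓞 K) ∈ P) (hP2 : (p : 𝓞 K) ∉ P ^ 2)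
    {x : 𝓞 K} (hx : x - 1 ∈ P) (hx0 : x - 1 ≠ 0) :
    ordIdeal P (Ideal.span {x ^ p - 1}) = ordIdeal P (Ideal.span {x - 1}) + 1 := by
  set S := ∑ j ∈ Finset.range p, x ^ j with hS
  set W := ∑ j ∈ Finset.range p, ∑ k ∈ Finset.range j, x ^ k with hW
  have hSW : S - (p : 𝓞 K) = W * (x - 1) := by
    have h1 : S - (p : 𝓞 K) = ∑ j ∈ Finset.range p, (x ^ j - 1) := by
      rw [hS, Finset.sum_sub_distrib]; simp
    rw [h1, hW, Finset.sum_mul]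
    exact Finset.sum_congr rfl fun j _ => (geom_sum_mul x j).symm
  have hWP : W ∈ P := by
    have h2 : W - ∑ j ∈ Finset.range p, (j : 𝓞 K) ∈ P := by
      rw [hW, ← Finset.sum_sub_distrib]
      exact Ideal.sum_mem _ fun j _ => geom_sub_mem P hx j
    have h3 : (∑ j ∈ Finset.range p, (j : 𝓞 K)) ∈ P := by
      have hcast : (∑ j ∈ Finset.range p, (j : 𝓞 K))
          = ((∑ j ∈ Finset.range p, j : ℕ) : 𝓞 K) := by push_cast; rfl
      obtain ⟨c, hc⟩ := hpodd
      have hgauss : (∑ j ∈ Finset.range p, j) = p * c := by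
        have h4 := Finset.sum_range_id_mul_two p
        have hc' : p - 1 = 2 * c := by omega
        rw [hc', show p * (2 * c) = p * c * 2 by ring] at h4
        omega
      rw [hcast, hgauss]
      push_cast
      exact Ideal.mul_mem_right _ _ hPp
    have := Ideal.add_mem P h2 h3
    simpa using this
  have key : S - (p : 𝓞 K) ∈ P ^ 2 := by
    rw [hSW, pow_two]
    exact Ideal.mul_mem_mul hWP hx
  have hSmem : S ∈ P := by
    have hp2le : S - (p : 𝓞 K) ∈ P := (Ideal.pow_le_self two_ne_zero) key
    have := Ideal.add_mem P hp2le hPp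
    simpa using this
  have hS2 : S ∉ P ^ 2 := by
    intro h
    exact hP2 (by simpa using Ideal.sub_mem _ h key)
  have hvS : ordIdeal P (Ideal.span {S}) = 1 :=
    ord_eq P (by simpa [pow_one] using hSmem) (by simpa using hS2)
  have hS0 : S ≠ 0 := fun h => hS2 (h ▸ (P ^ 2).zero_mem)
  have hmul : x ^ p - 1 = (x - 1) * S := (mul_geom_sum x p).symm
  rw [hmul, ord_mul P hx0 hS0, hvS]

lemma lte_G (α : 𝓞 K) (P : Ideal (𝓞 K)) [P.IsPrime] (p : ℕ) (hp : p.Prime)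
    (hαu : ∀ n : ℕ, 0 < n → α ^ n ≠ 1)
    (f : ℕ) (hf : 0 < f)
    (horder : ∀ m : ℕ, (α ^ m - 1 ∈ P ↔ f ∣ m))
    (hL1 : ∀ x : 𝓞 K, x - 1 ∈ P → x - 1 ≠ 0 → ∀ t : ℕ, ¬ p ∣ t →
      ordIdeal P (Ideal.span {x ^ t - 1}) = ordIdeal P (Ideal.span {x - 1}))
    (hL2 : ∀ x : 𝓞 K, x - 1 ∈ P → x - 1 ≠ 0 →
      ordIdeal P (Ideal.span {x ^ p - 1}) = ordIdeal P (Ideal.span {x - 1}) + 1) :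
    ∀ i t : ℕ, 0 < t → ¬ p ∣ t →
      ordIdeal P (Ideal.span {α ^ (f * p ^ i * t) - 1})
        = ordIdeal P (Ideal.span {α ^ f - 1}) + i := by
  have hne : ∀ m : ℕ, 0 < m → α ^ m - 1 ≠ 0 := by
    intro m hm h
    exact hαu m hm (by rwa [sub_eq_zero] at h)
  have base : ∀ i : ℕ, ordIdeal P (Ideal.span {α ^ (f * p ^ i) - 1})
      = ordIdeal P (Ideal.span {α ^ f - 1}) + i := by
    intro i
    induction i with
    | zero => simp
    | succ i ih =>
        have hmem : α ^ (f * p ^ i) - 1 ∈ P := (horder _).mpr ⟨p ^ i, rfl⟩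
        have hne' : α ^ (f * p ^ i) - 1 ≠ 0 :=
          hne _ (Nat.mul_pos hf (Nat.pow_pos hp.pos))
        have h2 := hL2 (α ^ (f * p ^ i)) hmem hne'
        rw [← pow_mul, mul_assoc, ← pow_succ] at h2
        rw [h2, ih]; omega
  intro i t ht hpt
  have hmem : α ^ (f * p ^ i) - 1 ∈ P := (horder _).mpr ⟨p ^ i, rfl⟩
  have hne' : α ^ (f * p ^ i) - 1 ≠ 0 :=
    hne _ (Nat.mul_pos hf (Nat.pow_pos hp.pos))
  have h1 := hL1 (α ^ (f * p ^ i)) hmem hne' t hpt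
  rw [← pow_mul] at h1
  rw [h1, base i]

lemma phi_prod (α : 𝓞 K) : ∀ m : ℕ, 0 < m →
    ∏ d ∈ m.divisors, Polynomial.eval α (Polynomial.cyclotomic d (𝓞 K)) = α ^ m - 1 := by
  intro m hm
  rw [← Polynomial.eval_prod, Polynomial.prod_cyclotomic_eq_X_pow_sub_one hm]
  simp

lemma phi_ne (α : 𝓞 K) (hαu : ∀ n : ℕ, 0 < n → α ^ n ≠ 1) :
    ∀ d : ℕ, 0 < d → Polynomial.eval α (Polynomial.cyclotomic d (𝓞 K)) ≠ 0 := by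
  intro d hd h0
  have h1 := phi_prod α d hd
  rw [Finset.prod_eq_zero (Nat.mem_divisors_self d hd.ne') h0] at h1
  exact hαu d hd (by rw [← sub_eq_zero]; exact h1.symm)

lemma phi_dvd (α : 𝓞 K) (d : ℕ) :
    Polynomial.eval α (Polynomial.cyclotomic d (𝓞 K)) ∣ α ^ d - 1 := by
  simpa using Polynomial.eval_dvd (x := α) (Polynomial.cyclotomic.dvd_X_pow_sub_one d (𝓞 K))

end Aux

theorem ord_cyclotomic_classification
    {K : Type*} [Field K] [NumberField K]
    (α : 𝓞 K) (hα0 : α ≠ 0) (hαu : ∀ n : ℕ, 0 < n → α ^ n ≠ 1)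
    (p : ℕ) (hp : p.Prime) (hpodd : Odd p)
    (hunram : ∀ Q : Ideal (𝓞 K), Q.IsPrime → (p : 𝓞 K) ∈ Q →
      Ideal.ramificationIdx' (Ideal.span {(p : ℤ)}) Q = 1)
    (P : Ideal (𝓞 K)) (hP : P.IsPrime) (hPbot : P ≠ ⊥) (hPp : (p : 𝓞 K) ∈ P)
    (hαP : α ∉ P)
    (f : ℕ) (hf : 0 < f) (hf1 : α ^ f - 1 ∈ P)
    (hfmin : ∀ m : ℕ, 0 < m → α ^ m - 1 ∈ P → f ≤ m)
    (δ : ℕ) (hδ : δ = ordIdeal P (Ideal.span {α ^ f - 1}))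
    (n : ℕ) (hn : 0 < n) :
    (n = f →
      ordIdeal P (Ideal.span {Polynomial.eval α (Polynomial.cyclotomic n (𝓞 K))}) = δ) ∧
    (∀ i : ℕ, 1 ≤ i → n = p ^ i * f →
      ordIdeal P (Ideal.span {Polynomial.eval α (Polynomial.cyclotomic n (𝓞 K))}) = 1) ∧
    ((n ≠ f ∧ ∀ i : ℕ, 1 ≤ i → n ≠ p ^ i * f) →
      ordIdeal P (Ideal.span {Polynomial.eval α (Polynomial.cyclotomic n (𝓞 K))}) = 0) := by
  haveI : Fact p.Prime := ⟨hp⟩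
  have horder := order_iff α P f hf hf1 hfmin
  have hnot := notmemP P hP p hp hPp
  have hP2 := p_not_in_P2 p hp hunram P hP hPbot hPp
  have hL1 : ∀ x : 𝓞 K, x - 1 ∈ P → x - 1 ≠ 0 → ∀ t : ℕ, ¬ p ∣ t →
      ordIdeal P (Ideal.span {x ^ t - 1}) = ordIdeal P (Ideal.span {x - 1}) :=
    fun x hx hx0 t hpt => lte_L1 P p hnot hx hx0 hpt
  have hL2 : ∀ x : 𝓞 K, x - 1 ∈ P → x - 1 ≠ 0 →
      ordIdeal P (Ideal.span {x ^ p - 1}) = ordIdeal P (Ideal.span {x - 1}) + 1 :=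
    fun x hx hx0 => lte_L2 P p hpodd hPp hP2 hx hx0
  have G := lte_G α P p hp hαu f hf horder hL1 hL2
  have hδ' : ordIdeal P (Ideal.span {α ^ f - 1}) = δ := hδ.symm
  have hvphi0 : ∀ d : ℕ, 0 < d → ¬ f ∣ d →
      ordIdeal P (Ideal.span {Polynomial.eval α (Polynomial.cyclotomic d (𝓞 K))}) = 0 := by
    intro d hd hfd
    refine ord_eq_zero P ?_
    intro hmem
    apply hfd
    apply (horder d).mp
    obtain ⟨c, hc⟩ := phi_dvd α d
    rw [hc]; exact Ideal.mul_mem_right _ _ hmem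
  have sum_div : ∀ m : ℕ, 0 < m →
      (∑ d ∈ m.divisors,
        ordIdeal P (Ideal.span {Polynomial.eval α (Polynomial.cyclotomic d (𝓞 K))}))
        = ordIdeal P (Ideal.span {α ^ m - 1}) := by
    intro m hm
    rw [← ord_prod P _ _ (fun d hd => phi_ne α hαu d (Nat.pos_of_mem_divisors hd)),
      phi_prod α m hm]
  refine ⟨?_, ?_, ?_⟩
  · -- n = f
    intro hnf
    subst hnf
    have h1 := sum_div n hn
    have hs := Finset.sum_eq_single_of_mem n (Nat.mem_divisors_self n hn.ne')
      (fun d hd hdf => hvphi0 d (Nat.pos_of_mem_divisors hd)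
        (fun hfd => hdf (Nat.dvd_antisymm (Nat.mem_divisors.mp hd).1 hfd)))
    rw [hs] at h1
    rw [h1, hδ']
  · -- n = p ^ i * f
    intro i hi hni
    subst hni
    have hfi : 0 < p ^ i * f := Nat.mul_pos (Nat.pow_pos hp.pos) hf
    set n' := p ^ (i - 1) * f with hn'def
    have hn'pos : 0 < n' := Nat.mul_pos (Nat.pow_pos hp.pos) hf
    have hn'dvd : n' ∣ p ^ i * f :=
      Nat.mul_dvd_mul (pow_dvd_pow p (by omega)) dvd_rfl
    have hsub : n'.divisors ⊆ (p ^ i * f).divisors :=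
      Nat.divisors_subset_of_dvd hfi.ne' hn'dvd
    have hsplit : (∑ d ∈ (p ^ i * f).divisors \ n'.divisors,
          ordIdeal P (Ideal.span {Polynomial.eval α (Polynomial.cyclotomic d (𝓞 K))}))
        + (∑ d ∈ n'.divisors,
          ordIdeal P (Ideal.span {Polynomial.eval α (Polynomial.cyclotomic d (𝓞 K))}))
        = ∑ d ∈ (p ^ i * f).divisors,
          ordIdeal P (Ideal.span {Polynomial.eval α (Polynomial.cyclotomic d (𝓞 K))}) :=
      Finset.sum_sdiff hsub
    have h1 : (∑ d ∈ (p ^ i * f).divisors,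
        ordIdeal P (Ideal.span {Polynomial.eval α (Polynomial.cyclotomic d (𝓞 K))}))
        = δ + i := by
      rw [sum_div _ hfi]
      have hg := G i 1 one_pos hp.not_dvd_one
      rw [mul_one] at hg
      rw [show p ^ i * f = f * p ^ i from mul_comm _ _, hg, hδ']
    have h2 : (∑ d ∈ n'.divisors,
        ordIdeal P (Ideal.span {Polynomial.eval α (Polynomial.cyclotomic d (𝓞 K))}))
        = δ + (i - 1) := by
      rw [sum_div _ hn'pos]
      have hg := G (i - 1) 1 one_pos hp.not_dvd_one
      rw [mul_one] at hg
      rw [hn'def, show p ^ (i - 1) * f = f * p ^ (i - 1) from mul_comm _ _, hg, hδ']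
    have h3 : (∑ d ∈ (p ^ i * f).divisors \ n'.divisors,
        ordIdeal P (Ideal.span {Polynomial.eval α (Polynomial.cyclotomic d (𝓞 K))}))
        = 1 := by omega
    have hlt : n' < p ^ i * f := by
      have hplt : p ^ (i - 1) < p ^ i :=
        Nat.pow_lt_pow_right hp.one_lt (by omega)
      exact Nat.mul_lt_mul_of_lt_of_le hplt le_rfl hf
    have hmem : p ^ i * f ∈ (p ^ i * f).divisors \ n'.divisors := by
      rw [Finset.mem_sdiff]
      refine ⟨Nat.mem_divisors_self _ hfi.ne', ?_⟩
      intro h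
      have := Nat.le_of_dvd hn'pos (Nat.mem_divisors.mp h).1
      omega
    have hside : ∀ d ∈ (p ^ i * f).divisors \ n'.divisors, d ≠ p ^ i * f →
        ordIdeal P (Ideal.span {Polynomial.eval α (Polynomial.cyclotomic d (𝓞 K))}) = 0 := by
      intro d hd hdn
      obtain ⟨hdn', hdnot⟩ := Finset.mem_sdiff.mp hd
      have hdpos := Nat.pos_of_mem_divisors hdn'
      refine hvphi0 d hdpos ?_
      rintro ⟨e, he⟩
      have hed : e ∣ p ^ i := by
        have h5 : f * e ∣ f * p ^ i := by
          rw [← he, mul_comm f (p ^ i)]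
          exact (Nat.mem_divisors.mp hdn').1
        exact (Nat.mul_dvd_mul_iff_left hf).mp h5
      obtain ⟨j, hji, hje⟩ := (Nat.dvd_prime_pow hp).mp hed
      by_cases hj : j = i
      · exact hdn (by rw [he, hje, hj, mul_comm])
      · apply hdnot
        rw [Nat.mem_divisors]
        refine ⟨?_, hn'pos.ne'⟩
        rw [he, hje, hn'def, mul_comm (p ^ (i - 1)) f]
        exact Nat.mul_dvd_mul_left f (pow_dvd_pow p (by omega))
    have hs := Finset.sum_eq_single_of_mem (p ^ i * f) hmem hside
    rw [hs] at h3
    exact h3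
  · -- otherwise
    rintro ⟨hnf, hnp⟩
    by_cases hfn : f ∣ n
    · obtain ⟨m, hm⟩ := hfn
      have hm0 : m ≠ 0 := by
        intro h; rw [h, mul_zero] at hm; omega
      set i := m.factorization p with hidef
      set t := m / p ^ i with htdef
      have hmt : p ^ i * t = m := Nat.ordProj_mul_ordCompl_eq_self m p
      have hpt : ¬ p ∣ t := Nat.not_dvd_ordCompl hp hm0
      have ht0 : 0 < t := Nat.ordCompl_pos p hm0
      have ht1 : t ≠ 1 := by
        intro h1
        rw [h1, mul_one] at hmt
        rcases Nat.eq_zero_or_pos i with hi0 | hi0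
        · apply hnf; rw [hm, ← hmt, hi0, pow_zero, mul_one]
        · exact hnp i hi0 (by rw [hm, ← hmt, mul_comm])
      set q := t.minFac with hqdef
      have hqprime : q.Prime := Nat.minFac_prime ht1
      have hqt : q ∣ t := Nat.minFac_dvd t
      have htq0 : 0 < t / q := Nat.div_pos (Nat.le_of_dvd ht0 hqt) hqprime.pos
      have hptq : ¬ p ∣ t / q := fun h => hpt (h.trans (Nat.div_dvd_of_dvd hqt))
      set n' := f * (p ^ i * (t / q)) with hn'def
      have hn'pos : 0 < n' := Nat.mul_pos hf (Nat.mul_pos (Nat.pow_pos hp.pos) htq0)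
      have ht' : p ^ i * t = p ^ i * (t / q) * q := by
        rw [mul_assoc, Nat.div_mul_cancel hqt]
      have hntq : n = n' * q := by
        rw [hm, ← hmt, ht', hn'def]; ring
      have hn'dvd : n' ∣ n := ⟨q, hntq⟩
      have hn'lt : n' < n := by
        have hq2 := hqprime.two_le
        calc n' = n' * 1 := (mul_one n').symm
        _ < n' * q := by
            exact Nat.mul_lt_mul_of_le_of_lt le_rfl (by omega) hn'pos
        _ = n := hntq.symm
      have hsub : n'.divisors ⊆ n.divisors := Nat.divisors_subset_of_dvd hn.ne' hn'dvd
      have hsplit : (∑ d ∈ n.divisors \ n'.divisors,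
            ordIdeal P (Ideal.span {Polynomial.eval α (Polynomial.cyclotomic d (𝓞 K))}))
          + (∑ d ∈ n'.divisors,
            ordIdeal P (Ideal.span {Polynomial.eval α (Polynomial.cyclotomic d (𝓞 K))}))
          = ∑ d ∈ n.divisors,
            ordIdeal P (Ideal.span {Polynomial.eval α (Polynomial.cyclotomic d (𝓞 K))}) :=
        Finset.sum_sdiff hsub
      have h1 : (∑ d ∈ n.divisors,
          ordIdeal P (Ideal.span {Polynomial.eval α (Polynomial.cyclotomic d (𝓞 K))}))
          = δ + i := by
        rw [sum_div n hn, hm, ← hmt, ← mul_assoc, G i t ht0 hpt, hδ']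
      have h2 : (∑ d ∈ n'.divisors,
          ordIdeal P (Ideal.span {Polynomial.eval α (Polynomial.cyclotomic d (𝓞 K))}))
          = δ + i := by
        rw [sum_div n' hn'pos, hn'def, ← mul_assoc, G i (t / q) htq0 hptq, hδ']
      have h3 : (∑ d ∈ n.divisors \ n'.divisors,
          ordIdeal P (Ideal.span {Polynomial.eval α (Polynomial.cyclotomic d (𝓞 K))}))
          = 0 := by omega
      have hmem : n ∈ n.divisors \ n'.divisors := by
        rw [Finset.mem_sdiff]
        refine ⟨Nat.mem_divisors_self n hn.ne', ?_⟩
        intro h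
        have := Nat.le_of_dvd hn'pos (Nat.mem_divisors.mp h).1
        omega
      exact (Finset.sum_eq_zero_iff.mp h3) n hmem
    · exact hvphi0 n hn hfn
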